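/- If β̂ ∈ ℝ^d is a global minimizer of f with β̂ ≠ 0, then (1 + tμ/‖β̂‖₂) · β̂ = S(z, tλ) (as vectors in ℝ^d), and consequently ‖β̂‖₂ = ‖S(z, tλ)‖₂ − tμ. -/

import Mathlib

open Finset
set_option maxHeartbeats 1000000

lemma soft_thresh_props (t lam zi si : ℝ) (ht : 0 < t) (hlam : 0 ≤ lam)
    (h : si = Real.sign zi * max (|zi| - t * lam) 0) :
    |zi - si| ≤ t * lam ∧ (zi - si) * si = t * lam * |si| := by
  have htl : 0 ≤ t * lam := mul_nonneg ht.le hlam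
  rcases lt_trichotomy zi 0 with hz | hz | hz
  · rw [Real.sign_of_neg hz, abs_of_neg hz] at h
    rcases le_or_gt (-zi) (t * lam) with hc | hc
    · rw [max_eq_right (by linarith), mul_zero] at h
      subst h
      refine ⟨by rw [sub_zero, abs_of_neg hz]; linarith, by ring_nf⟩
    · rw [max_eq_left (by linarith)] at h
      have hsi : si = zi + t * lam := by rw [h]; ring
      have hsneg : si < 0 := by linarith
      constructor
      · rw [hsi, show zi - (zi + t * lam) = -(t * lam) by ring, abs_neg, abs_of_nonneg htl]
      · rw [hsi] at hsneg ⊢; rw [abs_of_neg hsneg]; ring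
  · subst hz
    simp only [Real.sign_zero, zero_mul] at h
    subst h
    simp [htl]
  · rw [Real.sign_of_pos hz, abs_of_pos hz, one_mul] at h
    rcases le_or_gt zi (t * lam) with hc | hc
    · rw [max_eq_right (by linarith)] at h
      subst h
      refine ⟨by rw [sub_zero, abs_of_pos hz]; linarith, by simp⟩
    · rw [max_eq_left (by linarith)] at h
      have hspos : 0 < si := by rw [h]; linarith
      constructor
      · rw [h, show zi - (zi - t * lam) = t * lam by ring, abs_of_nonneg htl]
      · rw [h] at hspos ⊢; rw [abs_of_pos hspos]; ring

private lemma aux_div1 (t lam X a : ℝ) (ht : 0 < t) :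
    lam * a + (X - t * lam * a) / t = X / t := by
  field_simp
  ring

private lemma aux_div2 (t mu s I α : ℝ) (ht : t ≠ 0) (hs : s ≠ 0) :
    (t * mu / s) * (I - α * s ^ 2) / t = (mu / s) * I - mu * α * s := by
  field_simp

private lemma aux_expand (t mu s A B C D : ℝ) (ht : t ≠ 0) (hs : s ≠ 0) :
    1 / (2 * t) * (A + 2 * (-C - t * mu / s * D) + B)
      = 1 / (2 * t) * A + 1 / (2 * t) * B - C / t - (t * mu / s) * D / t := by
  field_simp; ring

private lemma aux_alpha (t mu s : ℝ) (hs : s ≠ 0) :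
    (1 : ℝ) - (s - t * mu) / s = t * mu / s := by
  field_simp
  ring

private lemma aux_coef (t mu s : ℝ) (hs : s ≠ 0) (hsm : s - t * mu ≠ 0) :
    (1 + t * mu / (s - t * mu)) * ((s - t * mu) / s) = 1 := by
  field_simp
  ring

theorem nonzero_minimizer_soft_threshold_equation
    (d : ℕ) (z : EuclideanSpace ℝ (Fin d)) (t lam mu : ℝ)
    (ht : 0 < t) (hlam : 0 ≤ lam) (hmu : 0 ≤ mu)
    (f : EuclideanSpace ℝ (Fin d) → ℝ)
    (hf : ∀ β, f β = 1 / (2 * t) * ‖β - z‖ ^ 2 + lam * ∑ i, |β i| + mu * ‖β‖)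
    (soft : EuclideanSpace ℝ (Fin d))
    (hsoft : ∀ i, soft i = Real.sign (z i) * max (|z i| - t * lam) 0)
    (βhat : EuclideanSpace ℝ (Fin d))
    (hmin : ∀ β, f βhat ≤ f β) (hne : βhat ≠ 0) :
    (1 + t * mu / ‖βhat‖) • βhat = soft ∧ ‖βhat‖ = ‖soft‖ - t * mu := by
  have hprops := fun i => soft_thresh_props t lam (z i) (soft i) ht hlam (hsoft i)
  have hl1 : ∀ (i : Fin d) (x : ℝ), (z i - soft i) * x ≤ t * lam * |x| := by
    intro i x
    calc (z i - soft i) * x ≤ |(z i - soft i) * x| := le_abs_self _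
      _ = |z i - soft i| * |x| := abs_mul _ _
      _ ≤ t * lam * |x| := mul_le_mul_of_nonneg_right (hprops i).1 (abs_nonneg x)
  have hinner : ∀ x y : EuclideanSpace ℝ (Fin d), (inner ℝ x y : ℝ) = ∑ i, x i * y i := by
    intro x y; simp [PiLp.inner_apply, RCLike.inner_apply, mul_comm]
  obtain ⟨s, hs⟩ : ∃ a : ℝ, a = ‖soft‖ := ⟨_, rfl⟩
  have hs0 : 0 ≤ s := hs ▸ norm_nonneg _
  rcases le_or_gt s (t * mu) with hcase | hcase
  · -- then 0 is the minimizer, contradiction with βhat ≠ 0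
    exfalso
    obtain ⟨L, hL⟩ : ∃ a : ℝ, a = lam * ∑ i, |βhat i| := ⟨_, rfl⟩
    obtain ⟨M, hM⟩ : ∃ a : ℝ, a = mu * ‖βhat‖ := ⟨_, rfl⟩
    have hLnn : 0 ≤ L := hL ▸ mul_nonneg hlam (Finset.sum_nonneg fun i _ => abs_nonneg _)
    have hMnn : 0 ≤ M := hM ▸ mul_nonneg hmu (norm_nonneg _)
    have hquad : ‖βhat - z‖ ^ 2 = ‖βhat‖ ^ 2 - 2 * (inner ℝ βhat z : ℝ) + ‖z‖ ^ 2 :=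
      norm_sub_sq_real βhat z
    have hIz : (inner ℝ βhat z : ℝ) = (∑ i, (z i - soft i) * βhat i) + (inner ℝ βhat soft : ℝ) := by
      rw [hinner, hinner, ← Finset.sum_add_distrib]
      congr 1; ext i; ring
    have h1 : (∑ i, (z i - soft i) * βhat i) ≤ t * L := by
      rw [hL, ← mul_assoc, Finset.mul_sum]
      exact Finset.sum_le_sum fun i _ => hl1 i (βhat i)
    have h2 : (inner ℝ βhat soft : ℝ) ≤ t * M := by
      calc (inner ℝ βhat soft : ℝ) ≤ ‖βhat‖ * s := hs ▸ real_inner_le_norm βhat soft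
        _ ≤ ‖βhat‖ * (t * mu) := mul_le_mul_of_nonneg_left (hs ▸ hcase) (norm_nonneg _)
        _ = t * M := by rw [hM]; ring
    have hI : (inner ℝ βhat z : ℝ) ≤ t * (L + M) := by rw [hIz]; linarith
    have hmin0 := hmin 0
    rw [hf βhat, hf 0] at hmin0
    simp only [zero_sub, norm_neg, norm_zero, mul_zero, add_zero] at hmin0
    have hsum0 : (∑ i : Fin d, |(0 : EuclideanSpace ℝ (Fin d)) i|) = 0 := by simp
    rw [hsum0, mul_zero, add_zero, ← hL, ← hM] at hmin0
    obtain ⟨c, hc⟩ : ∃ a : ℝ, a = 1 / (2 * t) := ⟨_, rfl⟩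
    rw [show (1:ℝ) / (2*t) = c from hc.symm] at hmin0
    have hcpos : 0 < c := by rw [hc]; positivity
    have hct : 2 * c * t = 1 := by rw [hc]; field_simp
    -- from hmin0: c * (b² - 2I + z²) + L + M ≤ c * z²
    have hb2c : c * ‖βhat‖ ^ 2 ≤ 2 * c * (inner ℝ βhat z : ℝ) - L - M := by
      rw [hquad] at hmin0; nlinarith [hmin0]
    have h2cI : 2 * c * (inner ℝ βhat z : ℝ) ≤ 2 * c * (t * (L + M)) :=
      mul_le_mul_of_nonneg_left hI (by positivity)
    have hfin : c * ‖βhat‖ ^ 2 ≤ 0 := by nlinarith [hct]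
    have hb2 : ‖βhat‖ ^ 2 ≤ 0 := by
      by_contra hcon
      push_neg at hcon
      nlinarith [mul_pos hcpos hcon]
    exact hne (norm_eq_zero.mp (le_antisymm (by nlinarith [norm_nonneg βhat]) (norm_nonneg βhat)))
  · have hspos : 0 < s := lt_of_le_of_lt (mul_nonneg ht.le hmu) hcase
    obtain ⟨α, hα⟩ : ∃ a : ℝ, a = (s - t * mu) / s := ⟨_, rfl⟩
    have hαpos : 0 < α := hα ▸ div_pos (by linarith) hspos
    have hαs : α * s = s - t * mu := hα ▸ div_mul_cancel₀ _ hspos.ne'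
    obtain ⟨βstar, hβstar⟩ : ∃ b : EuclideanSpace ℝ (Fin d), b = α • soft := ⟨_, rfl⟩
    have hnormstar : ‖βstar‖ = s - t * mu := by
      rw [hβstar, norm_smul, Real.norm_eq_abs, abs_of_pos hαpos, ← hs, hαs]
    have key : ∀ β, f βstar + 1 / (2 * t) * ‖β - βstar‖ ^ 2 ≤ f β := by
      intro β
      rw [hf βstar, hf β]
      have hquad : ‖β - z‖ ^ 2 =
          ‖β - βstar‖ ^ 2 + 2 * (inner ℝ (β - βstar) (βstar - z) : ℝ) + ‖βstar - z‖ ^ 2 := by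
        rw [show β - z = (β - βstar) + (βstar - z) by abel]
        exact norm_add_sq_real _ _
      have hα1 : (1:ℝ) - α = t * mu / s := by
        rw [hα]; exact aux_alpha t mu s hspos.ne'
      have hdecomp : (inner ℝ (β - βstar) (βstar - z) : ℝ) =
          -(∑ i, (z i - soft i) * (β i - βstar i)) - (t * mu / s) * (inner ℝ (β - βstar) soft : ℝ) := by
        rw [hinner, hinner, Finset.mul_sum, ← Finset.sum_neg_distrib, ← Finset.sum_sub_distrib]
        apply Finset.sum_congr rfl
        intro i _
        rw [hβstar]
        simp only [PiLp.sub_apply, PiLp.smul_apply, smul_eq_mul]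
        linear_combination (-(soft i) * (β i - α * soft i)) * hα1
      -- l1 part
      have hA : ∀ i : Fin d, lam * |βstar i| + (z i - soft i) * (β i - βstar i) / t ≤ lam * |β i| := by
        intro i
        have hstari : βstar i = α * soft i := by
          rw [hβstar]; simp only [PiLp.smul_apply, smul_eq_mul]
        have hws : (z i - soft i) * βstar i = t * lam * |βstar i| := by
          rw [hstari, abs_mul, abs_of_pos hαpos]
          nlinarith [(hprops i).2]
        have hwb := hl1 i (β i)
        have heq0 : lam * |βstar i| + (z i - soft i) * (β i - βstar i) / t
            = lam * |βstar i| + ((z i - soft i) * β i - t * lam * |βstar i|) / t := by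
          rw [mul_sub, hws]
        rw [heq0]
        rw [aux_div1 t lam ((z i - soft i) * β i) (|βstar i|) ht, div_le_iff₀ ht]
        nlinarith [hwb]
      -- l2 part
      have hB : mu * ‖βstar‖ + (t * mu / s) * (inner ℝ (β - βstar) soft : ℝ) / t ≤ mu * ‖β‖ := by
        have hic : (inner ℝ β soft : ℝ) ≤ ‖β‖ * s := hs ▸ real_inner_le_norm β soft
        have his : (inner ℝ βstar soft : ℝ) = α * s ^ 2 := by
          rw [hβstar, real_inner_smul_left, real_inner_self_eq_norm_sq, ← hs]
        have hrw : (inner ℝ (β - βstar) soft : ℝ) = (inner ℝ β soft : ℝ) - α * s ^ 2 := by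
          rw [inner_sub_left, his]
        rw [hrw, hnormstar]
        rw [aux_div2 t mu s (inner ℝ β soft : ℝ) α ht.ne' hspos.ne']
        have h2 : (mu / s) * (inner ℝ β soft : ℝ) ≤ mu * ‖β‖ := by
          calc (mu / s) * (inner ℝ β soft : ℝ) ≤ (mu / s) * (‖β‖ * s) :=
                mul_le_mul_of_nonneg_left hic (div_nonneg hmu hs0)
            _ = mu * ‖β‖ := by
                field_simp
        nlinarith [hαs]
      have hAsum : lam * (∑ i, |βstar i|) + (∑ i, (z i - soft i) * (β i - βstar i)) / t
          ≤ lam * ∑ i, |β i| := by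
        rw [Finset.mul_sum, Finset.mul_sum, Finset.sum_div, ← Finset.sum_add_distrib]
        exact Finset.sum_le_sum fun i _ => hA i
      rw [hquad, hdecomp]
      have ht' : (0:ℝ) < 2 * t := by linarith
      rw [aux_expand t mu s (‖β - βstar‖ ^ 2) (‖βstar - z‖ ^ 2)
        (∑ i, (z i - soft i) * (β i - βstar i)) (inner ℝ (β - βstar) soft : ℝ) ht.ne' hspos.ne']
      linarith [hAsum, hB]
    -- conclude βhat = βstar
    have hkey := key βhat
    have hle := hmin βstar
    have hz2 : ‖βhat - βstar‖ ^ 2 ≤ 0 := by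
      have hcpos : (0:ℝ) < 1 / (2 * t) := by positivity
      by_contra hcon
      push_neg at hcon
      nlinarith [mul_pos hcpos hcon]
    have heq : βhat = βstar := by
      have h0 : ‖βhat - βstar‖ = 0 :=
        le_antisymm (by nlinarith [norm_nonneg (βhat - βstar)]) (norm_nonneg (βhat - βstar))
      rwa [norm_eq_zero, sub_eq_zero] at h0
    have hnb : ‖βhat‖ = s - t * mu := by rw [heq, hnormstar]
    refine ⟨?_, by rw [hnb, hs]⟩
    rw [heq, hnormstar, hβstar, smul_smul]
    have hne' : (0:ℝ) < s - t * mu := by linarith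
    have hcoef : (1 + t * mu / (s - t * mu)) * α = 1 := by
      rw [hα]; exact aux_coef t mu s hspos.ne' hne'.ne'
    rw [hcoef, one_smul]
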